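/- For the two-level extension ranking ⊒^σ induced by a nonempty family σ(F) of extensions (rank 1 for extensions, rank 2 otherwise), if x belongs to every extension (skeptically accepted) and y does not belong to every extension, then any social ranking function satisfying Pareto-efficiency ranks x strictly above y. -/

import Mathlib

/-- Strict part of a relation on sets of elements. -/
def strictPart {α : Type*} (r : Finset α → Finset α → Prop) (X Y : Finset α) : Prop :=
  r X Y ∧ ¬ r Y X

/-- There is a strict chain `X₁ ⊐ X₂ ⊐ ⋯ ⊐ Xₙ ⊐ X` of length `n` above `X`. -/
def ChainAbove {α : Type*} (r : Finset α → Finset α → Prop) (X : Finset α) (n : ℕ) : Prop :=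
  ∃ l : List (Finset α), l.length = n ∧ List.Chain' (strictPart r) (l ++ [X])

/-- The rank of a set: one plus the maximal length of a strict chain above it. -/
noncomputable def rank {α : Type*} (r : Finset α → Finset α → Prop) (X : Finset α) : ℕ :=
  sSup {n | ChainAbove r X n} + 1
/-- Strict part of a preorder on elements. -/
def sp {β : Type*} (p : β → β → Prop) (x y : β) : Prop := p x y ∧ ¬ p y x

/-- A social ranking function maps rankings over sets to rankings over elements. -/
def SRF (α : Type*) := (Finset α → Finset α → Prop) → α → α → Prop

/-- Maximal rank of any set under `r`. -/
noncomputable def maxRank {α : Type*} (r : Finset α → Finset α → Prop) : ℕ :=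
  sSup (Set.range (rank r))

/-- Pareto-efficiency of a social ranking function. -/
def ParetoEfficient {α : Type*} [DecidableEq α] (ξ : SRF α) : Prop :=
  ∀ r : Finset α → Finset α → Prop, ∀ x y : α,
    (∀ Z : Finset α, x ∉ Z → y ∉ Z → rank r (insert x Z) ≤ rank r (insert y Z)) →
    (∃ Z : Finset α, x ∉ Z ∧ y ∉ Z ∧ rank r (insert x Z) < rank r (insert y Z)) →
    sp (ξ r) x y

/-- Independence from the worst set. -/
def IndepWorstSet {α : Type*} (ξ : SRF α) : Prop :=
  ∀ r r' : Finset α → Finset α → Prop,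
    (∀ X : Finset α, rank r X < maxRank r → rank r' X = rank r X) →
    (∀ X : Finset α, rank r X = maxRank r → maxRank r ≤ rank r' X) →
    ∀ x y : α, sp (ξ r) x y → sp (ξ r') x y

/-- Dominating set axiom. -/
def DominatingSet {α : Type*} (ξ : SRF α) : Prop :=
  ∀ r : Finset α → Finset α → Prop, ∀ x y : α,
    (∃ X : Finset α, x ∈ X ∧ ∀ Y : Finset α, y ∈ Y → strictPart r X Y) →
    sp (ξ r) x y

lemma rank_mem_ext {α : Type*} (ext : Set (Finset α)) {X : Finset α} (hX : X ∈ ext) :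
    rank (fun A B => A ∈ ext ∧ B ∉ ext) X = 1 := by
  have h : {n | ChainAbove (fun A B => A ∈ ext ∧ B ∉ ext) X n} = Set.Iic 0 := by
    ext n
    simp only [Set.mem_setOf_eq, Set.mem_Iic, Nat.le_zero]
    constructor
    · rintro ⟨l, rfl, hc⟩
      by_contra hn
      have hl : l ≠ [] := by
        intro h; subst h; simp at hn
      unfold List.Chain' at hc
      rw [List.isChain_append] at hc
      obtain ⟨-, -, h3⟩ := hc
      have := h3 (l.getLast hl) (by simp [List.getLast?_eq_getLast hl]) X (by simp)
      exact this.1.2 hX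
    · rintro rfl; exact ⟨[], rfl, List.isChain_singleton _⟩
  unfold rank
  rw [h, csSup_Iic]

lemma rank_not_ext {α : Type*} (ext : Set (Finset α)) (hne : ext.Nonempty)
    {X : Finset α} (hX : X ∉ ext) :
    rank (fun A B => A ∈ ext ∧ B ∉ ext) X = 2 := by
  obtain ⟨E, hE⟩ := hne
  have h : {n | ChainAbove (fun A B => A ∈ ext ∧ B ∉ ext) X n} = Set.Iic 1 := by
    ext n
    simp only [Set.mem_setOf_eq, Set.mem_Iic]
    constructor
    · rintro ⟨l, rfl, hc⟩
      match l, hc with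
      | [], _ => simp
      | [a], _ => simp
      | a :: b :: t, hc =>
        exfalso
        unfold List.Chain' at hc
        rw [List.cons_append, List.cons_append, List.isChain_cons_cons] at hc
        have h1 : b ∉ ext := hc.1.1.2
        have h2 : b ∈ ext := by
          rcases t with _ | ⟨c, t'⟩
          · rw [List.nil_append, List.isChain_cons_cons] at hc
            exact hc.2.1.1.1
          · rw [List.cons_append, List.isChain_cons_cons] at hc
            exact hc.2.1.1.1
        exact h1 h2
    · intro hn
      interval_cases n
      · exact ⟨[], rfl, List.isChain_singleton _⟩
      · refine ⟨[E], rfl, ?_⟩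
        simp only [List.cons_append, List.nil_append]
        exact List.isChain_pair.mpr ⟨⟨hE, hX⟩, fun h => hX h.1⟩
  unfold rank
  rw [h, csSup_Iic]

/-- under the two-level extension ranking, a Pareto-efficient social
ranking function ranks every skeptically accepted argument strictly above every
argument that is not skeptically accepted. -/
theorem stmt6 {α : Type*} [Fintype α] [DecidableEq α]
    (ext : Set (Finset α)) (hne : ext.Nonempty)
    (ξ : SRF α) (hP : ParetoEfficient ξ) (x y : α)
    (hx : ∀ E ∈ ext, x ∈ E) (hy : ∃ E ∈ ext, y ∉ E) :
    sp (ξ (fun X Y => X ∈ ext ∧ Y ∉ ext)) x y := by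
  obtain ⟨E₀, hE₀, hyE₀⟩ := hy
  have hxE₀ : x ∈ E₀ := hx E₀ hE₀
  have hxy : x ≠ y := fun h => hyE₀ (h ▸ hxE₀)
  set r := fun X Y => X ∈ ext ∧ Y ∉ ext with hr
  apply hP r x y
  · intro Z hxZ hyZ
    have hyZ' : insert y Z ∉ ext := by
      intro hmem
      have := hx _ hmem
      rcases Finset.mem_insert.mp this with h | h
      · exact hxy h
      · exact hxZ h
    rw [rank_not_ext ext ⟨E₀, hE₀⟩ hyZ']
    by_cases hxZ' : insert x Z ∈ ext
    · rw [rank_mem_ext ext hxZ']; omega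
    · rw [rank_not_ext ext ⟨E₀, hE₀⟩ hxZ']
  · refine ⟨E₀.erase x, Finset.notMem_erase x E₀, fun h => hyE₀ (Finset.mem_of_mem_erase h), ?_⟩
    have h1 : insert x (E₀.erase x) = E₀ := Finset.insert_erase hxE₀
    have h2 : insert y (E₀.erase x) ∉ ext := by
      intro hmem
      have := hx _ hmem
      rcases Finset.mem_insert.mp this with h | h
      · exact hxy h
      · exact Finset.notMem_erase x E₀ h
    rw [h1, rank_mem_ext ext hE₀, rank_not_ext ext ⟨E₀, hE₀⟩ h2]
    omega
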